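/- Let A ∈ R^{M×N}, d ∈ R^M, and w ∈ R^N nonnegative. Let x̂ be a minimizer over the nonnegative orthant of f(x) = (1/2)‖Ax - d‖² + ⟨w, |x|⟩. If for some index i we have w_i > σ(A)·‖d‖, where σ(A) is the largest singular value of A, then x̂_i = 0. -/

import Mathlib

/-- Euclidean norm of a vector. -/
noncomputable def l2norm {m : Type*} [Fintype m] (v : m → ℝ) : ℝ :=
  Real.sqrt (∑ i, (v i) ^ 2)

/-- The spectral norm (largest singular value) of a real matrix. -/
noncomputable def specNorm {m n : Type*} [Fintype m] [Fintype n] [DecidableEq n]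
    (A : Matrix m n ℝ) : ℝ :=
  ‖LinearMap.toContinuousLinearMap (Matrix.toEuclideanLin A)‖

theorem large_weight_forces_zero (M N : ℕ) (A : Matrix (Fin M) (Fin N) ℝ)
    (d : Fin M → ℝ) (w : Fin N → ℝ) (hw : ∀ i, 0 ≤ w i)
    (xhat : Fin N → ℝ) (hxhat : ∀ j, 0 ≤ xhat j)
    (hmin : ∀ x : Fin N → ℝ, (∀ j, 0 ≤ x j) →
      (1 / 2) * (∑ i, ((A.mulVec xhat - d) i) ^ 2) + (∑ i, w i * |xhat i|) ≤
      (1 / 2) * (∑ i, ((A.mulVec x - d) i) ^ 2) + (∑ i, w i * |x i|))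
    (i : Fin N) (hwi : specNorm A * l2norm d < w i) :
    xhat i = 0 := by
  by_contra hne
  have hpos : 0 < xhat i := lt_of_le_of_ne (hxhat i) (Ne.symm hne)
  set r : Fin M → ℝ := A.mulVec xhat - d with hr
  set a : Fin M → ℝ := fun k => A k i with ha
  set S : ℝ := ∑ k, r k * a k with hS
  set Q : ℝ := ∑ k, (a k) ^ 2 with hQ
  have hQ0 : 0 ≤ Q := Finset.sum_nonneg fun k _ => sq_nonneg _
  -- residual bound : ∑ r² ≤ ∑ d²
  have hres : ∑ k, (r k) ^ 2 ≤ ∑ k, (d k) ^ 2 := by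
    have h0 := hmin 0 (fun j => le_refl 0)
    simp only [Matrix.mulVec_zero] at h0
    have hwx : (0:ℝ) ≤ ∑ j, w j * |xhat j| :=
      Finset.sum_nonneg fun j _ => mul_nonneg (hw j) (abs_nonneg _)
    have : (1/2 : ℝ) * (∑ k, (r k) ^ 2) ≤ (1/2) * (∑ k, (d k) ^ 2) := by
      have hrhs : ∑ k, ((0 - d) k) ^ 2 = ∑ k, (d k) ^ 2 := by
        apply Finset.sum_congr rfl; intro k _; simp [neg_sq]
      have hz : ∑ j, w j * |(0:Fin N → ℝ) j| = 0 := by simp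
      rw [hrhs, hz] at h0
      linarith
    linarith
  -- optimality : ∀ t ∈ (0, xhat i], t * (w i + S) ≤ t^2 * (Q/2)
  have hopt : ∀ t : ℝ, 0 < t → t ≤ xhat i → t * (w i + S) ≤ t ^ 2 * (Q / 2) := by
    intro t ht htle
    set x : Fin N → ℝ := xhat - t • (Pi.single i 1 : Fin N → ℝ) with hx
    have hxnn : ∀ j, 0 ≤ x j := by
      intro j
      by_cases hj : j = i
      · subst hj; simp [hx, Pi.single_eq_same]; linarith
      · simp [hx, Pi.single_eq_of_ne hj]
        exact hxhat j
    have hAx : A.mulVec x = fun k => r k + d k - t * a k := by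
      funext k
      simp [hx, Matrix.mulVec_sub, Matrix.mulVec_smul, Matrix.mulVec_single, hr, ha]
    have hquad : ∑ k, ((A.mulVec x - d) k) ^ 2
        = (∑ k, (r k) ^ 2) - 2 * t * S + t ^ 2 * Q := by
      rw [hS, hQ, Finset.mul_sum, Finset.mul_sum, ← Finset.sum_sub_distrib,
        ← Finset.sum_add_distrib]
      apply Finset.sum_congr rfl
      intro k _
      rw [hAx]
      simp only [Pi.sub_apply]
      ring
    have habs : ∑ j, w j * |x j| = (∑ j, w j * |xhat j|) - t * w i := by
      have : ∀ j, w j * |x j| = w j * |xhat j| - (if j = i then t * w i else 0) := by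
        intro j
        by_cases hj : j = i
        · subst hj
          have : x j = xhat j - t := by simp [hx, Pi.single_eq_same]
          rw [this, if_pos rfl, abs_of_nonneg (by linarith [hxnn j] : (0:ℝ) ≤ xhat j - t),
            abs_of_nonneg (hxhat j)]
          ring
        · have : x j = xhat j := by simp [hx, Pi.single_eq_of_ne hj]
          rw [this, if_neg hj, sub_zero]
      simp only [this, Finset.sum_sub_distrib, Finset.sum_ite_eq' Finset.univ i
        (fun _ => t * w i), Finset.mem_univ, if_pos]
    have h := hmin x hxnn
    rw [hquad, habs] at h
    nlinarith [h]
  -- deduce w i + S ≤ 0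
  have hkey : w i + S ≤ 0 := by
    by_contra hc
    push_neg at hc
    rcases eq_or_lt_of_le hQ0 with hQz | hQp
    · have := hopt (xhat i) hpos le_rfl
      rw [← hQz] at this
      nlinarith
    · set t := min (xhat i) ((w i + S) / Q) with htdef
      have ht0 : 0 < t := lt_min hpos (div_pos hc hQp)
      have h1 := hopt t ht0 (min_le_left _ _)
      have h2 : t ≤ (w i + S) / Q := min_le_right _ _
      have h3 : t * Q ≤ w i + S := by
        have := (le_div_iff₀ hQp).mp h2
        linarith
      nlinarith [mul_le_mul_of_nonneg_left h3 ht0.le, mul_pos (mul_pos ht0 ht0) hQp]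
  -- Cauchy–Schwarz : -S ≤ √(∑ r²) * √(∑ a²)
  have hcs : -S ≤ Real.sqrt (∑ k, (r k) ^ 2) * Real.sqrt Q := by
    have := Real.sum_mul_le_sqrt_mul_sqrt Finset.univ (fun k => -(r k)) a
    simp only [neg_mul, Finset.sum_neg_distrib, neg_sq] at this
    simpa [hS, hQ, ← Finset.sum_neg_distrib, neg_mul] using this
  -- √(∑ r²) ≤ l2norm d
  have hr_le : Real.sqrt (∑ k, (r k) ^ 2) ≤ l2norm d := Real.sqrt_le_sqrt hres
  -- √Q ≤ specNorm A
  have ha_le : Real.sqrt Q ≤ specNorm A := by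
    have hnorm : ‖(LinearMap.toContinuousLinearMap (Matrix.toEuclideanLin A))
        (EuclideanSpace.single i (1:ℝ))‖ ≤ specNorm A * ‖EuclideanSpace.single i (1:ℝ)‖ :=
      ContinuousLinearMap.le_opNorm _ _
    rw [EuclideanSpace.norm_single, norm_one, mul_one] at hnorm
    have heq : ‖(LinearMap.toContinuousLinearMap (Matrix.toEuclideanLin A))
        (EuclideanSpace.single i (1:ℝ))‖ = Real.sqrt Q := by
      rw [LinearMap.coe_toContinuousLinearMap']
      rw [show (EuclideanSpace.single i (1:ℝ))
          = (WithLp.equiv 2 (Fin N → ℝ)).symm (Pi.single i 1) from rfl,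
        WithLp.equiv_symm_apply, Matrix.toEuclideanLin_apply_piLp_toLp, Matrix.mulVec_single]
      rw [EuclideanSpace.norm_eq, hQ]
      congr 1
      apply Finset.sum_congr rfl
      intro k _
      simp [PiLp.toLp_apply, ha, Real.norm_eq_abs, sq_abs]
    linarith [heq ▸ hnorm]
  have hl2d : 0 ≤ l2norm d := Real.sqrt_nonneg _
  have hQs : 0 ≤ Real.sqrt Q := Real.sqrt_nonneg _
  have : -S ≤ specNorm A * l2norm d := by
    calc -S ≤ Real.sqrt (∑ k, (r k) ^ 2) * Real.sqrt Q := hcs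
    _ ≤ l2norm d * specNorm A := mul_le_mul hr_le ha_le hQs hl2d
    _ = specNorm A * l2norm d := mul_comm _ _
  linarith
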